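/- Let s ≥ 3 and δ ≥ 0 be integers, set r = s(s+1)/2 + δ and γ = r + s + 2, and let b_j denote the coefficient of t^j in the polynomial B(t) = (1−t)^{r+1}(1 + (r+1)t) + γ·t²·(1−t)^r. Then (−1)^{r−s}·b_{r−s+2} = ((2δ + 4 − s² + s)/(s² − s + 2δ + 4))·C(r, s) as rational numbers, where C(r,s) is the binomial coefficient 'r choose s'. -/

import Mathlib

open Polynomial in
lemma coeff_one_sub_X_pow (n k : ℕ) :
    ((1 - Polynomial.X : Polynomial ℚ) ^ n).coeff k = (-1) ^ k * n.choose k := by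
  have h1 : (1 - X : ℚ[X]) = -(X + C (-1)) := by
    rw [Polynomial.C_neg, map_one]; ring
  have h2 : ((-1 : ℚ[X])) ^ n = C ((-1 : ℚ) ^ n) := by simp
  rw [h1, neg_pow, h2, coeff_C_mul, coeff_X_add_C_pow]
  rcases le_or_gt k n with h | h
  · have hs : (-1 : ℚ) ^ n * (-1) ^ (n - k) = (-1) ^ k := by
      rw [← pow_add]
      have hn : n + (n - k) = k + 2 * (n - k) := by omega
      rw [hn, pow_add, pow_mul]
      simp
    rw [← mul_assoc, hs]
  · simp [Nat.choose_eq_zero_of_lt h]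

/-- Let `s ≥ 3` and `δ ≥ 0` be integers, set `r = s(s+1)/2 + δ` and
`γ = r + s + 2`, and let `b j` denote the coefficient of `t^j` in the polynomial
`B(t) = (1-t)^(r+1) * (1 + (r+1)t) + γ t² (1-t)^r`.  Then
`(-1)^(r-s) * b_(r-s+2) = ((2δ + 4 - s² + s)/(s² - s + 2δ + 4)) * (r choose s)`
as rational numbers. -/
theorem minimal_resolution_conjecture_points_hilbert_coefficient
    (s δ r γ : ℕ) (hs : 3 ≤ s) (hr : r = s * (s + 1) / 2 + δ) (hγ : γ = r + s + 2)
    (B : Polynomial ℚ)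
    (hB : B = (1 - Polynomial.X) ^ (r + 1) * (1 + Polynomial.C ((r : ℚ) + 1) * Polynomial.X)
        + Polynomial.C (γ : ℚ) * Polynomial.X ^ 2 * (1 - Polynomial.X) ^ r) :
    (-1 : ℚ) ^ (r - s) * B.coeff (r - s + 2)
      = ((2 * (δ : ℚ) + 4 - (s : ℚ) ^ 2 + s) / ((s : ℚ) ^ 2 - s + 2 * δ + 4))
          * (r.choose s : ℚ) := by
  have hsr : s ≤ r := by
    have : s ≤ s * (s + 1) / 2 := Nat.le_div_iff_mul_le (by norm_num) |>.2 (by nlinarith)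
    omega
  set a := r - s with ha
  have har : r = a + s := by omega
  -- 2r = s^2 + s + 2δ
  have h2r : 2 * r = s * (s + 1) + 2 * δ := by
    have he : 2 * (s * (s + 1) / 2) = s * (s + 1) := Nat.two_mul_div_two_of_even (Nat.even_mul_succ_self s)
    omega
  -- coefficient computation
  have hP : B = (1 - Polynomial.X) ^ (r + 1)
      + Polynomial.C ((r : ℚ) + 1) * ((1 - Polynomial.X) ^ (r + 1) * Polynomial.X)
      + Polynomial.C (γ : ℚ) * (Polynomial.X ^ 2 * (1 - Polynomial.X) ^ r) := by
    rw [hB]; ring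
  have hcoeff : B.coeff (a + 2)
      = (-1) ^ (a + 2) * ((r + 1).choose (a + 2) : ℚ)
        + ((r : ℚ) + 1) * ((-1) ^ (a + 1) * ((r + 1).choose (a + 1) : ℚ))
        + (γ : ℚ) * ((-1) ^ a * (r.choose a : ℚ)) := by
    rw [hP]
    rw [Polynomial.coeff_add, Polynomial.coeff_add, Polynomial.coeff_C_mul,
      Polynomial.coeff_C_mul]
    have e1 : ((1 - Polynomial.X : Polynomial ℚ) ^ (r + 1) * Polynomial.X).coeff (a + 2)
        = ((1 - Polynomial.X : Polynomial ℚ) ^ (r + 1)).coeff (a + 1) :=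
      Polynomial.coeff_mul_X _ _
    have e2 : (Polynomial.X ^ 2 * (1 - Polynomial.X : Polynomial ℚ) ^ r).coeff (a + 2)
        = ((1 - Polynomial.X : Polynomial ℚ) ^ r).coeff a :=
      Polynomial.coeff_X_pow_mul _ _ _
    rw [e1, e2, coeff_one_sub_X_pow, coeff_one_sub_X_pow, coeff_one_sub_X_pow]
  -- binomial identities
  have hsym : r.choose a = r.choose s := by rw [ha, Nat.choose_symm hsr]
  have hb1 : ((a : ℚ) + 1) * ((r + 1).choose (a + 1) : ℚ)
      = ((r : ℚ) + 1) * (r.choose s : ℚ) := by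
    have := Nat.add_one_mul_choose_eq r a
    rw [hsym] at this
    have := congrArg (Nat.cast : ℕ → ℚ) this
    push_cast at this
    linarith
  have hy : ((a : ℚ) + 1) * (r.choose (a + 1) : ℚ) = (s : ℚ) * (r.choose s : ℚ) := by
    have h := Nat.choose_succ_right_eq r a
    rw [hsym] at h
    have hra : r - a = s := by omega
    rw [hra] at h
    have := congrArg (Nat.cast : ℕ → ℚ) h
    push_cast at this
    linarith
  have hb2 : ((a : ℚ) + 2) * ((r + 1).choose (a + 2) : ℚ)
      = ((r : ℚ) + 1) * (r.choose (a + 1) : ℚ) := by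
    have := Nat.add_one_mul_choose_eq r (a + 1)
    have := congrArg (Nat.cast : ℕ → ℚ) this
    push_cast at this
    linarith
  -- put together
  have hsign : (-1 : ℚ) ^ a * B.coeff (a + 2)
      = ((r + 1).choose (a + 2) : ℚ) - ((r : ℚ) + 1) * ((r + 1).choose (a + 1) : ℚ)
        + (γ : ℚ) * (r.choose s : ℚ) := by
    rw [hcoeff, hsym]
    have h1 : (-1 : ℚ) ^ a * (-1) ^ a = 1 := by
      rw [← pow_add, ← two_mul, pow_mul]; simp
    rw [pow_add, pow_add]
    linear_combination (((r + 1).choose (a + 2) : ℚ)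
      - ((r : ℚ) + 1) * ((r + 1).choose (a + 1) : ℚ) + (γ : ℚ) * (r.choose s : ℚ)) * h1
  rw [hsign]
  -- now pure algebra
  have ha1 : ((a : ℚ) + 1) ≠ 0 := by positivity
  have ha2 : ((a : ℚ) + 2) ≠ 0 := by positivity
  have hsq : (3 : ℚ) ≤ (s : ℚ) := by exact_mod_cast hs
  have hd0 : (0 : ℚ) ≤ (δ : ℚ) := by positivity
  have hden : ((s : ℚ) ^ 2 - s + 2 * δ + 4) ≠ 0 := by nlinarith
  have hrq : (r : ℚ) = (a : ℚ) + s := by exact_mod_cast har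
  have hγq : (γ : ℚ) = (r : ℚ) + s + 2 := by exact_mod_cast hγ
  have hδq : (δ : ℚ) = (2 * (a : ℚ) + s - (s : ℚ) ^ 2) / 2 := by
    have h2q : 2 * (r : ℚ) = (s : ℚ) * (s + 1) + 2 * δ := by exact_mod_cast h2r
    rw [hrq] at h2q
    field_simp
    ring_nf
    ring_nf at h2q
    linarith
  have eB1 : (((r + 1).choose (a + 1) : ℚ)) = ((r : ℚ) + 1) * (r.choose s : ℚ) / ((a : ℚ) + 1) := by
    field_simp
    linarith [hb1]
  have eY : ((r.choose (a + 1) : ℚ)) = (s : ℚ) * (r.choose s : ℚ) / ((a : ℚ) + 1) := by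
    field_simp
    linarith [hy]
  have eA : (((r + 1).choose (a + 2) : ℚ))
      = ((r : ℚ) + 1) * (s : ℚ) * (r.choose s : ℚ) / (((a : ℚ) + 1) * ((a : ℚ) + 2)) := by
    rw [eY] at hb2
    field_simp at hb2 ⊢
    linarith [hb2]
  rw [eA, eB1, hγq, hrq, hδq]
  rw [hδq] at hden
  have hdd : (s : ℚ) ^ 2 - s + 2 * ((2 * (a : ℚ) + s - (s : ℚ) ^ 2) / 2) + 4 = 2 * (a : ℚ) + 4 := by ring
  rw [hdd]
  field_simp
  ring
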